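/- Under the stated assumptions, the second moment of the autoregressive coefficient is identified from the first three autocorrelations of first differences: E(φ²) = (1 + 2ρ₁ + 2ρ₂ + ρ₃)/(1 + ρ₁). -/

import Mathlib

open MeasureTheory

/-- The second moment of the autoregressive coefficient is identified from the first three
autocorrelations of first differences: `E(φ²) = (1 + 2ρ₁ + 2ρ₂ + ρ₃)/(1 + ρ₁)`. -/
theorem second_moment_identified
    {Ω : Type*} [MeasurableSpace Ω] (P : Measure Ω) [IsProbabilityMeasure P]
    (φ : Ω → ℝ) (hφm : Measurable φ) (ε₀ : ℝ) (hε₀ : 0 < ε₀)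
    (hφbd : ∀ᵐ ω ∂P, -1 + ε₀ ≤ φ ω ∧ φ ω ≤ 1)
    (ρ : ℕ → ℝ)
    (hρ : ∀ h : ℕ, 1 ≤ h → ρ h =
      -(∫ ω, ((1 - φ ω) / (1 + φ ω)) * φ ω ^ (h - 1) ∂P) /
        (2 * ∫ ω, 1 / (1 + φ ω) ∂P)) :
    ∫ ω, (φ ω) ^ 2 ∂P = (1 + 2 * ρ 1 + 2 * ρ 2 + ρ 3) / (1 + ρ 1) := by
  have hpos : ∀ᵐ ω ∂P, ε₀ ≤ 1 + φ ω ∧ φ ω ≤ 1 ∧ |φ ω| ≤ 1 := by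
    filter_upwards [hφbd] with ω h
    refine ⟨by linarith [h.1], h.2, abs_le.2 ⟨by linarith [h.1], h.2⟩⟩
  have hmeas : Measurable fun ω => 1 / (1 + φ ω) :=
    measurable_const.div (measurable_const.add hφm)
  have hint1 : Integrable (fun ω => 1 / (1 + φ ω)) P := by
    refine Integrable.mono' (integrable_const (1 / ε₀)) hmeas.aestronglyMeasurable ?_
    filter_upwards [hpos] with ω ⟨h1, h2, h3⟩
    have h0 : (0:ℝ) < 1 + φ ω := lt_of_lt_of_le hε₀ h1
    rw [Real.norm_eq_abs, abs_of_pos (by positivity)]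
    exact one_div_le_one_div_of_le hε₀ h1
  have hintφ : Integrable φ P := by
    refine Integrable.mono' (integrable_const 1) hφm.aestronglyMeasurable ?_
    filter_upwards [hpos] with ω ⟨h1, h2, h3⟩
    simpa [Real.norm_eq_abs] using h3
  have hintφ2 : Integrable (fun ω => φ ω ^ 2) P := by
    refine Integrable.mono' (integrable_const 1) (hφm.pow_const 2).aestronglyMeasurable ?_
    filter_upwards [hpos] with ω ⟨h1, h2, h3⟩
    rw [Real.norm_eq_abs, abs_pow]
    calc |φ ω| ^ 2 ≤ 1 ^ 2 := pow_le_pow_left₀ (abs_nonneg _) h3 2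
    _ = 1 := one_pow 2
  set D := ∫ ω, 1 / (1 + φ ω) ∂P with hDdef
  set Eφ := ∫ ω, φ ω ∂P with hEdef
  have hD : (1:ℝ) / 2 ≤ D := by
    have : ∫ ω, (1:ℝ)/2 ∂P ≤ D := by
      refine integral_mono_ae (integrable_const _) hint1 ?_
      filter_upwards [hpos] with ω ⟨h1, h2, h3⟩
      have h0 : (0:ℝ) < 1 + φ ω := lt_of_lt_of_le hε₀ h1
      rw [div_le_div_iff₀ (by norm_num) h0]
      linarith
    simpa using this
  have hDne : D ≠ 0 := by positivity
  have e1 : ∫ ω, ((1 - φ ω) / (1 + φ ω)) * φ ω ^ (1 - 1 : ℕ) ∂P = 2 * D - 1 := by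
    have hc : ∀ᵐ ω ∂P, ((1 - φ ω) / (1 + φ ω)) * φ ω ^ (1 - 1 : ℕ)
        = 2 * (1 / (1 + φ ω)) - 1 := by
      filter_upwards [hpos] with ω ⟨h1, h2, h3⟩
      have h0 : (1:ℝ) + φ ω ≠ 0 := ne_of_gt (lt_of_lt_of_le hε₀ h1)
      field_simp
      ring
    have h1 : ∫ ω, (2 * (1 / (1 + φ ω)) - 1) ∂P
        = (∫ ω, 2 * (1 / (1 + φ ω)) ∂P) - ∫ ω, (1:ℝ) ∂P :=
      integral_sub (hint1.const_mul 2) (integrable_const 1)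
    have h2 : ∫ ω, 2 * (1 / (1 + φ ω)) ∂P = 2 * D := by
      rw [integral_const_mul, ← hDdef]
    rw [integral_congr_ae hc, h1, h2, integral_const]
    simp
  have e2 : ∫ ω, ((1 - φ ω) / (1 + φ ω)) * φ ω ^ (2 - 1 : ℕ) ∂P = 2 - 2 * D - Eφ := by
    have hc : ∀ᵐ ω ∂P, ((1 - φ ω) / (1 + φ ω)) * φ ω ^ (2 - 1 : ℕ)
        = (2 - 2 * (1 / (1 + φ ω))) - φ ω := by
      filter_upwards [hpos] with ω ⟨h1, h2, h3⟩
      have h0 : (1:ℝ) + φ ω ≠ 0 := ne_of_gt (lt_of_lt_of_le hε₀ h1)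
      field_simp
      ring
    have step : ∫ ω, (2 - 2 * (1 / (1 + φ ω))) ∂P = 2 - 2 * D := by
      have h1 : ∫ ω, (2 - 2 * (1 / (1 + φ ω))) ∂P
          = (∫ ω, (2:ℝ) ∂P) - ∫ ω, 2 * (1 / (1 + φ ω)) ∂P :=
        integral_sub (integrable_const 2) (hint1.const_mul 2)
      have h2 : ∫ ω, 2 * (1 / (1 + φ ω)) ∂P = 2 * D := by
        rw [integral_const_mul, ← hDdef]
      rw [h1, h2, integral_const]
      simp
    have h3 : ∫ ω, (2 - 2 * (1 / (1 + φ ω)) - φ ω) ∂P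
        = (∫ ω, (2 - 2 * (1 / (1 + φ ω))) ∂P) - ∫ ω, φ ω ∂P :=
      integral_sub ((integrable_const 2).sub (hint1.const_mul 2)) hintφ
    rw [integral_congr_ae hc, h3, step, ← hEdef]
  have e3 : ∫ ω, ((1 - φ ω) / (1 + φ ω)) * φ ω ^ (3 - 1 : ℕ) ∂P
      = (2 * Eφ - 2 + 2 * D) - ∫ ω, φ ω ^ 2 ∂P := by
    have hc : ∀ᵐ ω ∂P, ((1 - φ ω) / (1 + φ ω)) * φ ω ^ (3 - 1 : ℕ)
        = ((2 * φ ω - 2) + 2 * (1 / (1 + φ ω))) - φ ω ^ 2 := by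
      filter_upwards [hpos] with ω ⟨h1, h2, h3⟩
      have h0 : (1:ℝ) + φ ω ≠ 0 := ne_of_gt (lt_of_lt_of_le hε₀ h1)
      field_simp
      ring
    have step : ∫ ω, (2 * φ ω - 2 + 2 * (1 / (1 + φ ω))) ∂P = 2 * Eφ - 2 + 2 * D := by
      have h1 : ∫ ω, (2 * φ ω - 2 + 2 * (1 / (1 + φ ω))) ∂P
          = (∫ ω, (2 * φ ω - 2) ∂P) + ∫ ω, 2 * (1 / (1 + φ ω)) ∂P :=
        integral_add ((hintφ.const_mul 2).sub (integrable_const 2)) (hint1.const_mul 2)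
      have h2 : ∫ ω, (2 * φ ω - 2) ∂P = (∫ ω, 2 * φ ω ∂P) - ∫ ω, (2:ℝ) ∂P :=
        integral_sub (hintφ.const_mul 2) (integrable_const 2)
      have h4 : ∫ ω, 2 * (1 / (1 + φ ω)) ∂P = 2 * D := by
        rw [integral_const_mul, ← hDdef]
      have h5 : ∫ ω, 2 * φ ω ∂P = 2 * Eφ := by
        rw [integral_const_mul, ← hEdef]
      rw [h1, h2, h4, h5, integral_const]
      simp
    have h6 : ∫ ω, (2 * φ ω - 2 + 2 * (1 / (1 + φ ω)) - φ ω ^ 2) ∂P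
        = (∫ ω, (2 * φ ω - 2 + 2 * (1 / (1 + φ ω))) ∂P) - ∫ ω, φ ω ^ 2 ∂P :=
      integral_sub (((hintφ.const_mul 2).sub (integrable_const 2)).add (hint1.const_mul 2))
        hintφ2
    rw [integral_congr_ae hc, h6, step]
  have hρ1 : ρ 1 = -(2 * D - 1) / (2 * D) := by rw [hρ 1 le_rfl, e1]
  have hρ2 : ρ 2 = -(2 - 2 * D - Eφ) / (2 * D) := by rw [hρ 2 (by norm_num), e2]
  have hρ3 : ρ 3 = -((2 * Eφ - 2 + 2 * D) - ∫ ω, φ ω ^ 2 ∂P) / (2 * D) := by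
    rw [hρ 3 (by norm_num), e3]
  rw [hρ1, hρ2, hρ3]
  have h1ρ : 1 + -(2 * D - 1) / (2 * D) = 1 / (2 * D) := by
    field_simp
    ring
  rw [h1ρ]
  field_simp
  ring
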